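/- Let B be a faithful section of a base of B(H)^+, a ∈ B(H)^+, and b̃₀ ∈ B̃. Then ‖a‖_B = Tr(a b̃₀) if and only if there exists q ∈ Q = span(B) ∩ B(H)^+ with a ≤ q and (q − a)b̃₀ = 0; in that case q = ‖a‖_B · b₀ for some b₀ ∈ B and ‖a‖_B = 2^{D_max(a‖b₀)}. -/

import Mathlib

open Matrix ComplexOrder

variable {n : ℕ}

def Sb (b : Matrix (Fin n) (Fin n) ℂ) : Set (Matrix (Fin n) (Fin n) ℂ) :=
  {a | a.PosSemidef ∧ (a * b).trace = 1}

def IsSection (B : Set (Matrix (Fin n) (Fin n) ℂ)) : Prop :=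
  ∃ (L : Submodule ℝ (Matrix (Fin n) (Fin n) ℂ)) (b : Matrix (Fin n) (Fin n) ℂ),
    b.PosDef ∧ B = (L : Set (Matrix (Fin n) (Fin n) ℂ)) ∩ Sb b

def IsFaithfulSection (B : Set (Matrix (Fin n) (Fin n) ℂ)) : Prop :=
  IsSection B ∧ ∃ b ∈ B, b.PosDef

def dualSection (B : Set (Matrix (Fin n) (Fin n) ℂ)) : Set (Matrix (Fin n) (Fin n) ℂ) :=
  {c | c.PosSemidef ∧ ∀ b ∈ B, (b * c).trace = 1}

noncomputable def secNorm (B : Set (Matrix (Fin n) (Fin n) ℂ))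
    (x : Matrix (Fin n) (Fin n) ℂ) : ℝ :=
  sInf {t : ℝ | 0 ≤ t ∧ ∃ b ∈ B, (t • b - x).PosSemidef ∧ (t • b + x).PosSemidef}

noncomputable def expDmax (a b : Matrix (Fin n) (Fin n) ℂ) : ENNReal :=
  ⨅ (r : ℝ) (_ : 0 < r) (_ : (r • b - a).PosSemidef), ENNReal.ofReal r

/-! ### Auxiliary lemmas -/

open scoped MatrixOrder in
noncomputable def Matrix.PosSemidef.sqrt {A : Matrix (Fin n) (Fin n) ℂ} (_hA : A.PosSemidef) :
    Matrix (Fin n) (Fin n) ℂ := CFC.sqrt A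

open scoped MatrixOrder in
lemma Matrix.PosSemidef.posSemidef_sqrt {A : Matrix (Fin n) (Fin n) ℂ} (hA : A.PosSemidef) :
    hA.sqrt.PosSemidef := Matrix.nonneg_iff_posSemidef.mp (CFC.sqrt_nonneg A)

open scoped MatrixOrder in
lemma Matrix.PosSemidef.sqrt_mul_self {A : Matrix (Fin n) (Fin n) ℂ} (hA : A.PosSemidef) :
    hA.sqrt * hA.sqrt = A := CFC.sqrt_mul_sqrt_self A (Matrix.nonneg_iff_posSemidef.mpr hA)

lemma Matrix.posSemidef_iff_eq_transpose_mul_self {A : Matrix (Fin n) (Fin n) ℂ} :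
    A.PosSemidef ↔ ∃ B : Matrix (Fin n) (Fin n) ℂ, A = Bᴴ * B := by
  constructor
  · intro hA; exact ⟨hA.sqrt, by rw [hA.posSemidef_sqrt.1.eq, hA.sqrt_mul_self]⟩
  · rintro ⟨B, rfl⟩; exact posSemidef_conjTranspose_mul_self B

lemma trace_ct_mul_self (A : Matrix (Fin n) (Fin n) ℂ) :
    (Aᴴ * A).trace = ((∑ i, ∑ j, Complex.normSq (A j i) : ℝ) : ℂ) := by
  simp only [Matrix.trace, Matrix.diag, Matrix.mul_apply, Matrix.conjTranspose_apply,
    Complex.star_def, ← Complex.normSq_eq_conj_mul_self]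
  push_cast
  ring

lemma trace_ct_nonneg (A : Matrix (Fin n) (Fin n) ℂ) : 0 ≤ (Aᴴ * A).trace := by
  rw [trace_ct_mul_self, Complex.zero_le_real]
  exact Finset.sum_nonneg fun i _ => Finset.sum_nonneg fun j _ => Complex.normSq_nonneg _

lemma eq_zero_of_trace_ct (A : Matrix (Fin n) (Fin n) ℂ) (h : (Aᴴ * A).trace = 0) : A = 0 := by
  rw [trace_ct_mul_self] at h
  norm_cast at h
  have h2 : ∀ i ∈ Finset.univ, ∀ j ∈ Finset.univ, Complex.normSq (A j i) = 0 := by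
    intro i _ j _
    have := Finset.sum_eq_zero_iff_of_nonneg
      (fun i _ => Finset.sum_nonneg fun j _ => Complex.normSq_nonneg _) |>.mp h i
      (Finset.mem_univ i)
    exact (Finset.sum_eq_zero_iff_of_nonneg (fun j _ => Complex.normSq_nonneg _)).mp this j
      (Finset.mem_univ j)
  ext i j
  simpa using Complex.normSq_eq_zero.mp (h2 j (Finset.mem_univ j) i (Finset.mem_univ i))

lemma trace_mul_psd_key {A C : Matrix (Fin n) (Fin n) ℂ} (hA : A.PosSemidef) (hC : C.PosSemidef) :
    (A * C).trace = ((hA.sqrt * hC.sqrt)ᴴ * (hA.sqrt * hC.sqrt)).trace := by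
  have h1 : (hA.sqrt * hC.sqrt)ᴴ = hC.sqrt * hA.sqrt := by
    rw [conjTranspose_mul, hA.posSemidef_sqrt.1.eq, hC.posSemidef_sqrt.1.eq]
  have e1 : (hC.sqrt * hA.sqrt) * (hA.sqrt * hC.sqrt)
      = hC.sqrt * (hA.sqrt * hA.sqrt * hC.sqrt) := by
    simp only [Matrix.mul_assoc]
  have e2 : (hA.sqrt * hA.sqrt * hC.sqrt) * hC.sqrt = A * C := by
    rw [hA.sqrt_mul_self, Matrix.mul_assoc, hC.sqrt_mul_self]
  rw [h1, e1, trace_mul_comm hC.sqrt, e2]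

lemma trace_mul_psd_nonneg {A C : Matrix (Fin n) (Fin n) ℂ} (hA : A.PosSemidef)
    (hC : C.PosSemidef) : 0 ≤ (A * C).trace := by
  rw [trace_mul_psd_key hA hC]; exact trace_ct_nonneg _

lemma trace_mul_psd_eq_re {A C : Matrix (Fin n) (Fin n) ℂ} (hA : A.PosSemidef)
    (hC : C.PosSemidef) :
    (A * C).trace = (((A * C).trace.re : ℝ) : ℂ) ∧ 0 ≤ (A * C).trace.re := by
  have h := trace_mul_psd_nonneg hA hC
  rw [Complex.nonneg_iff] at h
  exact ⟨Complex.ext rfl h.2.symm, h.1⟩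

lemma mul_eq_zero_of_trace_zero {A C : Matrix (Fin n) (Fin n) ℂ} (hA : A.PosSemidef)
    (hC : C.PosSemidef) (h : (A * C).trace = 0) : A * C = 0 := by
  rw [trace_mul_psd_key hA hC] at h
  have hM : hA.sqrt * hC.sqrt = 0 := eq_zero_of_trace_ct _ h
  have e : hA.sqrt * (hA.sqrt * hC.sqrt) * hC.sqrt = A * C := by
    rw [show hA.sqrt * (hA.sqrt * hC.sqrt) * hC.sqrt
        = (hA.sqrt * hA.sqrt * hC.sqrt) * hC.sqrt from by simp only [Matrix.mul_assoc],
      hA.sqrt_mul_self, Matrix.mul_assoc, hC.sqrt_mul_self]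
  rw [← e, hM, Matrix.mul_zero, Matrix.zero_mul]

lemma real_smul_eq (t : ℝ) (A : Matrix (Fin n) (Fin n) ℂ) : t • A = (t : ℂ) • A := by
  ext i j; simp [Complex.real_smul]

lemma psd_real_smul {A : Matrix (Fin n) (Fin n) ℂ} (hA : A.PosSemidef) {t : ℝ} (ht : 0 ≤ t) :
    (t • A).PosSemidef := by
  rw [real_smul_eq]
  refine Matrix.PosSemidef.of_dotProduct_mulVec_nonneg ?_ fun x => ?_
  · unfold Matrix.IsHermitian
    rw [conjTranspose_smul, hA.1.eq, RCLike.star_def, Complex.conj_ofReal]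
  · rw [smul_mulVec, dotProduct_smul, smul_eq_mul]
    exact mul_nonneg (Complex.zero_le_real.mpr ht) (hA.dotProduct_mulVec_nonneg x)

lemma isClosed_psd : IsClosed {A : Matrix (Fin n) (Fin n) ℂ | A.PosSemidef} := by
  have heq : {A : Matrix (Fin n) (Fin n) ℂ | A.PosSemidef} =
      {A : Matrix (Fin n) (Fin n) ℂ | Aᴴ = A} ∩ ⋂ x : Fin n → ℂ, {A | 0 ≤ star x ⬝ᵥ A *ᵥ x} := by
    ext A
    simp only [Set.mem_setOf_eq, Set.mem_inter_iff, Set.mem_iInter]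
    exact Matrix.posSemidef_iff_dotProduct_mulVec
  rw [heq]
  refine IsClosed.inter (isClosed_eq (continuous_id.matrix_conjTranspose) continuous_id) ?_
  refine isClosed_iInter fun x => ?_
  have hc : Continuous fun A : Matrix (Fin n) (Fin n) ℂ => star x ⬝ᵥ A *ᵥ x :=
    (continuous_const).dotProduct (continuous_id.matrix_mulVec continuous_const)
  exact isClosed_le continuous_const hc

lemma psd_abs_apply_le_trace {A : Matrix (Fin n) (Fin n) ℂ} (hA : A.PosSemidef) (i j : Fin n) :
    ‖A i j‖ ≤ A.trace.re := by
  obtain ⟨M, rfl⟩ := Matrix.posSemidef_iff_eq_transpose_mul_self.mp hA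
  have htr : (Mᴴ * M).trace.re = ∑ i', ∑ j', Complex.normSq (M j' i') := by
    rw [trace_ct_mul_self]; exact Complex.ofReal_re _
  rw [htr]
  set S : Fin n → ℝ := fun c => ∑ k, Complex.normSq (M k c) with hS
  have hSnonneg : ∀ c, 0 ≤ S c := fun c => Finset.sum_nonneg fun k _ => Complex.normSq_nonneg _
  have hStot : ∀ c, S c ≤ ∑ i', ∑ j', Complex.normSq (M j' i') :=
    fun c => Finset.single_le_sum (f := S) (fun i' _ => hSnonneg i') (Finset.mem_univ c)
  have hij : (Mᴴ * M) i j = ∑ k, (starRingEnd ℂ) (M k i) * M k j := by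
    simp [Matrix.mul_apply, Matrix.conjTranspose_apply, Complex.star_def]
  rw [hij]
  calc ‖∑ k, (starRingEnd ℂ) (M k i) * M k j‖
      ≤ ∑ k, ‖(starRingEnd ℂ) (M k i) * M k j‖ := norm_sum_le _ _
    _ ≤ ∑ k, (Complex.normSq (M k i) + Complex.normSq (M k j)) / 2 := by
        refine Finset.sum_le_sum fun k _ => ?_
        rw [norm_mul, Complex.norm_conj]
        have h2 : 2 * ‖M k i‖ * ‖M k j‖ ≤
            ‖M k i‖ ^ 2 + ‖M k j‖ ^ 2 := two_mul_le_add_sq _ _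
        rw [Complex.sq_norm, Complex.sq_norm] at h2
        linarith
    _ = (S i + S j) / 2 := by rw [hS]; rw [← Finset.sum_add_distrib, ← Finset.sum_div]
    _ ≤ ∑ i', ∑ j', Complex.normSq (M j' i') := by
        have := hStot i; have := hStot j; linarith

lemma posdef_exists_eps {b : Matrix (Fin n) (Fin n) ℂ} (hb : b.PosDef) :
    ∃ ε : ℝ, 0 < ε ∧ (b - (ε:ℂ) • 1).PosSemidef := by
  rcases isEmpty_or_nonempty (Fin n) with h | h
  · refine ⟨1, one_pos, ⟨?_, fun x => ?_⟩⟩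
    · ext i j; exact h.elim i
    · rw [show x = 0 from Finsupp.ext fun i => h.elim i]; simp
  · set ev := hb.1.eigenvalues with hev
    obtain ⟨i₀, -, hi₀⟩ := Finset.exists_min_image Finset.univ ev
      ⟨Classical.arbitrary (Fin n), Finset.mem_univ _⟩
    refine ⟨ev i₀, hb.eigenvalues_pos i₀, ?_⟩
    have hU : (hb.1.eigenvectorUnitary : Matrix (Fin n) (Fin n) ℂ) *
        ((ev i₀ : ℂ) • 1) * (star hb.1.eigenvectorUnitary : Matrix (Fin n) (Fin n) ℂ)
        = (ev i₀ : ℂ) • 1 := by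
      rw [Matrix.mul_smul, Matrix.mul_one, Matrix.smul_mul,
        (Matrix.mem_unitaryGroup_iff).mp (hb.1.eigenvectorUnitary).2]
    have key : b - (ev i₀ : ℂ) • 1 =
        (hb.1.eigenvectorUnitary : Matrix (Fin n) (Fin n) ℂ) *
          (diagonal (RCLike.ofReal ∘ ev) - (ev i₀ : ℂ) • 1) *
          (star hb.1.eigenvectorUnitary : Matrix (Fin n) (Fin n) ℂ) := by
      rw [Matrix.mul_sub, Matrix.sub_mul, hU]
      conv_lhs => rw [hb.1.spectral_theorem, Unitary.conjStarAlgAut_apply]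
    rw [key]
    have hdiag : (diagonal (RCLike.ofReal ∘ ev) - (ev i₀ : ℂ) • (1 : Matrix (Fin n) (Fin n) ℂ))
        = diagonal (fun i => ((ev i - ev i₀ : ℝ) : ℂ)) := by
      ext i j
      rcases eq_or_ne i j with rfl | hij
      · simp [Matrix.sub_apply, Matrix.smul_apply, Matrix.one_apply_eq, RCLike.ofReal]
      · simp [Matrix.diagonal_apply_ne _ hij, Matrix.sub_apply, Matrix.smul_apply,
          Matrix.one_apply_ne hij]
    rw [hdiag]
    have hd : (diagonal (fun i => ((ev i - ev i₀ : ℝ) : ℂ))).PosSemidef :=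
      Matrix.posSemidef_diagonal_iff.mpr fun i =>
        Complex.zero_le_real.mpr (by linarith [hi₀ i (Finset.mem_univ i)])
    have hfin := hd.mul_mul_conjTranspose_same
      (hb.1.eigenvectorUnitary : Matrix (Fin n) (Fin n) ℂ)
    rwa [← Matrix.star_eq_conjTranspose] at hfin

lemma psd_le_smul_one {a : Matrix (Fin n) (Fin n) ℂ} (ha : a.PosSemidef) :
    ∃ C : ℝ, 0 ≤ C ∧ ((C:ℂ) • 1 - a).PosSemidef := by
  rcases isEmpty_or_nonempty (Fin n) with h | h
  · refine ⟨0, le_rfl, ⟨?_, fun x => ?_⟩⟩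
    · ext i j; exact h.elim i
    · rw [show x = 0 from Finsupp.ext fun i => h.elim i]; simp
  · set ev := ha.1.eigenvalues with hev
    obtain ⟨i₀, -, hi₀⟩ := Finset.exists_max_image Finset.univ ev
      ⟨Classical.arbitrary (Fin n), Finset.mem_univ _⟩
    refine ⟨ev i₀, ha.eigenvalues_nonneg i₀, ?_⟩
    have hU : (ha.1.eigenvectorUnitary : Matrix (Fin n) (Fin n) ℂ) *
        ((ev i₀ : ℂ) • 1) * (star ha.1.eigenvectorUnitary : Matrix (Fin n) (Fin n) ℂ)
        = (ev i₀ : ℂ) • 1 := by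
      rw [Matrix.mul_smul, Matrix.mul_one, Matrix.smul_mul,
        (Matrix.mem_unitaryGroup_iff).mp (ha.1.eigenvectorUnitary).2]
    have key : (ev i₀ : ℂ) • 1 - a =
        (ha.1.eigenvectorUnitary : Matrix (Fin n) (Fin n) ℂ) *
          ((ev i₀ : ℂ) • 1 - diagonal (RCLike.ofReal ∘ ev)) *
          (star ha.1.eigenvectorUnitary : Matrix (Fin n) (Fin n) ℂ) := by
      rw [Matrix.mul_sub, Matrix.sub_mul, hU]
      conv_lhs => rw [ha.1.spectral_theorem, Unitary.conjStarAlgAut_apply]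
    rw [key]
    have hdiag : ((ev i₀ : ℂ) • (1 : Matrix (Fin n) (Fin n) ℂ) - diagonal (RCLike.ofReal ∘ ev))
        = diagonal (fun i => ((ev i₀ - ev i : ℝ) : ℂ)) := by
      ext i j
      rcases eq_or_ne i j with rfl | hij
      · simp [Matrix.sub_apply, Matrix.smul_apply, Matrix.one_apply_eq, RCLike.ofReal]
      · simp [Matrix.diagonal_apply_ne _ hij, Matrix.sub_apply, Matrix.smul_apply,
          Matrix.one_apply_ne hij]
    rw [hdiag]
    have hd : (diagonal (fun i => ((ev i₀ - ev i : ℝ) : ℂ))).PosSemidef :=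
      Matrix.posSemidef_diagonal_iff.mpr fun i =>
        Complex.zero_le_real.mpr (by linarith [hi₀ i (Finset.mem_univ i)])
    have hfin := hd.mul_mul_conjTranspose_same
      (ha.1.eigenvectorUnitary : Matrix (Fin n) (Fin n) ℂ)
    rwa [← Matrix.star_eq_conjTranspose] at hfin

lemma isCompact_section (L : Submodule ℝ (Matrix (Fin n) (Fin n) ℂ))
    {b₁ : Matrix (Fin n) (Fin n) ℂ} (hb₁ : b₁.PosDef) :
    IsCompact ((L : Set (Matrix (Fin n) (Fin n) ℂ)) ∩ Sb b₁) := by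
  obtain ⟨ε, hε, hεpsd⟩ := posdef_exists_eps hb₁
  have hbound : ∀ x ∈ (L : Set (Matrix (Fin n) (Fin n) ℂ)) ∩ Sb b₁, ∀ i j,
      ‖x i j‖ ≤ 1/ε := by
    rintro x ⟨-, hxpsd, hxtr⟩ i j
    have h0 : 0 ≤ (x * (b₁ - (ε:ℂ) • 1)).trace := trace_mul_psd_nonneg hxpsd hεpsd
    have hexp : (x * (b₁ - (ε:ℂ) • 1)).trace = 1 - (ε:ℂ) * x.trace := by
      rw [Matrix.mul_sub, trace_sub, hxtr, Matrix.mul_smul, Matrix.mul_one, trace_smul,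
        smul_eq_mul]
    rw [hexp, Complex.nonneg_iff] at h0
    have him : x.trace = (x.trace.re : ℂ) := by
      have h1 := trace_mul_psd_nonneg hxpsd (Matrix.PosSemidef.one)
      rw [Matrix.mul_one, Complex.nonneg_iff] at h1
      exact Complex.ext rfl h1.2.symm
    have hre : (1 - (ε:ℂ) * x.trace).re = 1 - ε * x.trace.re := by
      rw [him]; simp
    rw [hre] at h0
    have htrb : x.trace.re ≤ 1/ε := by
      rw [le_div_iff₀ hε, mul_comm]; linarith [h0.1]
    exact le_trans (psd_abs_apply_le_trace hxpsd i j) htrb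
  have hK : IsCompact ((Set.univ.pi fun _ : Fin n => Set.univ.pi fun _ : Fin n =>
      Metric.closedBall (0:ℂ) (1/ε)) : Set (Matrix (Fin n) (Fin n) ℂ)) :=
    isCompact_univ_pi fun _ => isCompact_univ_pi fun _ => isCompact_closedBall _ _
  refine hK.of_isClosed_subset ?_ ?_
  · refine IsClosed.inter L.closed_of_finiteDimensional (IsClosed.inter isClosed_psd ?_)
    exact isClosed_eq ((continuous_id.matrix_mul continuous_const).matrix_trace) continuous_const
  · intro x hx
    intro i _
    intro j _
    simpa [Complex.dist_eq] using hbound x hx i j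

lemma sInf_attained {B : Set (Matrix (Fin n) (Fin n) ℂ)} (hBc : IsCompact B)
    (a : Matrix (Fin n) (Fin n) ℂ)
    (hne : {t : ℝ | 0 ≤ t ∧ ∃ b ∈ B, ((t:ℝ) • b - a).PosSemidef}.Nonempty) :
    ∃ b₀ ∈ B,
      ((sInf {t : ℝ | 0 ≤ t ∧ ∃ b ∈ B, ((t:ℝ) • b - a).PosSemidef}) • b₀ - a).PosSemidef := by
  set S := {t : ℝ | 0 ≤ t ∧ ∃ b ∈ B, ((t:ℝ) • b - a).PosSemidef} with hSdef
  obtain ⟨T₀, hT₀⟩ := hne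
  set C := {p : ℝ × Matrix (Fin n) (Fin n) ℂ | p.1 ∈ Set.Icc 0 T₀ ∧ p.2 ∈ B ∧
      (p.1 • p.2 - a).PosSemidef} with hCdef
  have hCclosed : IsClosed C := by
    refine IsClosed.inter (isClosed_Icc.preimage continuous_fst) (IsClosed.inter ?_ ?_)
    · exact hBc.isClosed.preimage continuous_snd
    · exact isClosed_psd.preimage ((continuous_fst.smul continuous_snd).sub continuous_const)
  have hCcompact : IsCompact C := (isCompact_Icc.prod hBc).of_isClosed_subset hCclosed
    (fun p hp => ⟨hp.1, hp.2.1⟩)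
  have hCne : C.Nonempty := by
    obtain ⟨hT₀0, b, hbB, hbpsd⟩ := hT₀
    exact ⟨(T₀, b), ⟨hT₀0, le_rfl⟩, hbB, hbpsd⟩
  set S' := Prod.fst '' C with hS'def
  have hS'c : IsCompact S' := hCcompact.image continuous_fst
  have hS'ne : S'.Nonempty := hCne.image _
  have hS'sub : S' ⊆ S := by
    rintro t ⟨p, hp, rfl⟩
    exact ⟨hp.1.1, p.2, hp.2.1, hp.2.2⟩
  have hSbdd : BddBelow S := ⟨0, fun t ht => ht.1⟩
  have hinf : sInf S = sInf S' := by
    refine le_antisymm (csInf_le_csInf hSbdd hS'ne hS'sub) ?_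
    refine le_csInf ⟨T₀, hT₀⟩ fun t ht => ?_
    rcases le_or_gt t T₀ with h | h
    · refine csInf_le hS'c.bddBelow ?_
      obtain ⟨ht0, b, hbB, hbpsd⟩ := ht
      exact ⟨(t, b), ⟨⟨ht0, h⟩, hbB, hbpsd⟩, rfl⟩
    · have hmem : T₀ ∈ S' := by
        obtain ⟨hT₀0, b, hbB, hbpsd⟩ := hT₀
        exact ⟨(T₀, b), ⟨⟨hT₀0, le_rfl⟩, hbB, hbpsd⟩, rfl⟩
      exact le_trans (csInf_le hS'c.bddBelow hmem) h.le
  obtain ⟨p, hpC, hp1⟩ := hS'c.sInf_mem hS'ne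
  refine ⟨p.2, hpC.2.1, ?_⟩
  rw [hinf, ← hp1]
  exact hpC.2.2

/-- Characterization of the maximizer: `‖a‖_B = Tr(a b̃₀)` iff there is `q ∈ Q` with `a ≤ q`
and `(q - a) b̃₀ = 0`; in that case `q = ‖a‖_B • b₀` with `b₀ ∈ B` and
`‖a‖_B = 2^{D_max(a‖b₀)}`. -/
theorem stmt14 (B : Set (Matrix (Fin n) (Fin n) ℂ)) (hB : IsFaithfulSection B)
    (a : Matrix (Fin n) (Fin n) ℂ) (ha : a.PosSemidef)
    (c₀ : Matrix (Fin n) (Fin n) ℂ) (hc₀ : c₀ ∈ dualSection B) :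
    (secNorm B a = ((a * c₀).trace).re ↔
      ∃ q : Matrix (Fin n) (Fin n) ℂ, q ∈ Submodule.span ℝ B ∧ q.PosSemidef ∧
        (q - a).PosSemidef ∧ (q - a) * c₀ = 0) ∧
    (∀ q : Matrix (Fin n) (Fin n) ℂ, q ∈ Submodule.span ℝ B → q.PosSemidef →
      (q - a).PosSemidef → (q - a) * c₀ = 0 →
      ∃ b₀ ∈ B, q = secNorm B a • b₀ ∧
        ENNReal.ofReal (secNorm B a) = expDmax a b₀) := by
  obtain ⟨⟨L, b₁, hb₁, hBeq⟩, bs, hbsB, hbspd⟩ := hB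
  have hBsubL : B ⊆ (L : Set (Matrix (Fin n) (Fin n) ℂ)) := by
    rw [hBeq]; exact Set.inter_subset_left
  have hBpsd : ∀ b ∈ B, b.PosSemidef := by
    intro b hb; rw [hBeq] at hb; exact hb.2.1
  have hBtr : ∀ b ∈ B, (b * b₁).trace = 1 := by
    intro b hb; rw [hBeq] at hb; exact hb.2.2
  obtain ⟨hc₀psd, hc₀tr⟩ := hc₀
  set S := {t : ℝ | 0 ≤ t ∧ ∃ b ∈ B, (t • b - a).PosSemidef} with hSdef
  have hsec : secNorm B a = sInf S := by
    unfold secNorm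
    congr 1
    ext t
    simp only [hSdef, Set.mem_setOf_eq]
    constructor
    · rintro ⟨ht, b, hb, h1, -⟩; exact ⟨ht, b, hb, h1⟩
    · rintro ⟨ht, b, hb, h1⟩
      exact ⟨ht, b, hb, h1, (psd_real_smul (hBpsd b hb) ht).add ha⟩
  obtain ⟨ε, hε, hεpsd⟩ := posdef_exists_eps hbspd
  obtain ⟨Ca, hCa0, hCapsd⟩ := psd_le_smul_one ha
  have hT₀S : (Ca / ε) ∈ S := by
    refine ⟨div_nonneg hCa0 hε.le, bs, hbsB, ?_⟩
    have hco : ((Ca/ε : ℝ) : ℂ) * (ε : ℂ) = (Ca : ℂ) := by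
      push_cast; field_simp
    have hsplit : (Ca/ε) • bs - a = (Ca/ε) • (bs - (ε:ℂ) • 1) + ((Ca:ℂ) • 1 - a) := by
      simp only [real_smul_eq]
      rw [smul_sub, smul_smul, hco]
      abel
    rw [hsplit]
    exact (psd_real_smul hεpsd (div_nonneg hCa0 hε.le)).add hCapsd
  have hSne : S.Nonempty := ⟨_, hT₀S⟩
  have hSbdd : BddBelow S := ⟨0, fun t ht => ht.1⟩
  have hBc : IsCompact B := by rw [hBeq]; exact isCompact_section L hb₁
  obtain ⟨b₀m, hb₀mB, hb₀mpsd⟩ := sInf_attained hBc a hSne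
  have hN0 : (0:ℝ) ≤ sInf S := le_csInf hSne fun t ht => ht.1
  have hlow : ∀ t ∈ S, (a * c₀).trace.re ≤ t := by
    rintro t ⟨ht0, b, hbB, hpsd⟩
    have h0 : 0 ≤ ((t • b - a) * c₀).trace := trace_mul_psd_nonneg hpsd hc₀psd
    have hexp : ((t • b - a) * c₀).trace = (t:ℂ) - (a * c₀).trace := by
      rw [Matrix.sub_mul, trace_sub, real_smul_eq, Matrix.smul_mul, trace_smul, smul_eq_mul,
        hc₀tr b hbB, mul_one]
    rw [hexp, Complex.nonneg_iff] at h0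
    have h1 := h0.1
    simp only [Complex.sub_re, Complex.ofReal_re] at h1
    linarith
  have hNlow : (a * c₀).trace.re ≤ sInf S := le_csInf hSne hlow
  have hacre : (a * c₀).trace = (((a * c₀).trace.re : ℝ) : ℂ) :=
    (trace_mul_psd_eq_re ha hc₀psd).1
  have key : ∀ q : Matrix (Fin n) (Fin n) ℂ, q ∈ Submodule.span ℝ B → q.PosSemidef →
      (q - a).PosSemidef → (q - a) * c₀ = 0 →
      (sInf S = (a * c₀).trace.re ∧ ∃ b₀ ∈ B, q = sInf S • b₀ ∧
        ENNReal.ofReal (sInf S) = expDmax a b₀) := by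
    intro q hqspan hqpsd hqa hqc
    have hqL : q ∈ L := Submodule.span_le.mpr hBsubL hqspan
    have htrq0 : 0 ≤ (q * b₁).trace := trace_mul_psd_nonneg hqpsd hb₁.posSemidef
    have htrqre : (q * b₁).trace = (((q * b₁).trace.re : ℝ) : ℂ) :=
      (trace_mul_psd_eq_re hqpsd hb₁.posSemidef).1
    set s := (q * b₁).trace.re with hs
    have hs0 : 0 ≤ s := (trace_mul_psd_eq_re hqpsd hb₁.posSemidef).2
    have htr_eq : (a * c₀).trace = (q * c₀).trace := by
      have h0 : ((q - a) * c₀).trace = 0 := by rw [hqc, trace_zero]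
      rw [Matrix.sub_mul, trace_sub, sub_eq_zero] at h0
      exact h0.symm
    rcases eq_or_lt_of_le hs0 with hs0' | hspos
    · -- degenerate case s = 0: q = 0 and a = 0
      have hqb₁ : (q * b₁).trace = 0 := by rw [htrqre, ← hs0', Complex.ofReal_zero]
      have hq0 : q = 0 := by
        have hz := mul_eq_zero_of_trace_zero hqpsd hb₁.posSemidef hqb₁
        have hdet : IsUnit b₁.det := (Matrix.isUnit_iff_isUnit_det b₁).mp hb₁.isUnit
        calc q = q * b₁ * b₁⁻¹ := by rw [Matrix.mul_nonsing_inv_cancel_right b₁ q hdet]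
          _ = 0 := by rw [hz, Matrix.zero_mul]
      have hnegpsd : (-a).PosSemidef := by
        have := hqa; rw [hq0, zero_sub] at this; exact this
      have ha0 : a = 0 := by
        have hmv : ∀ x, a *ᵥ x = 0 := by
          intro x
          apply (ha.dotProduct_mulVec_zero_iff x).mp
          have h1 := ha.dotProduct_mulVec_nonneg x
          have h2 := hnegpsd.dotProduct_mulVec_nonneg x
          rw [neg_mulVec, dotProduct_neg] at h2
          exact le_antisymm (by simpa using neg_nonneg.mp (by simpa using h2)) h1
        ext i j
        have hcol := congrFun (hmv (Pi.single j 1)) i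
        simpa [Matrix.mulVec_single] using hcol
      have h0S : (0:ℝ) ∈ S := by
        refine ⟨le_rfl, bs, hbsB, ?_⟩
        rw [ha0, zero_smul, sub_zero]
        exact Matrix.PosSemidef.zero
      have hN : sInf S = 0 := le_antisymm (csInf_le hSbdd h0S) hN0
      refine ⟨?_, bs, hbsB, ?_, ?_⟩
      · rw [hN, htr_eq, hq0, Matrix.zero_mul, trace_zero, Complex.zero_re]
      · rw [hq0, hN, zero_smul]
      · rw [hN, ENNReal.ofReal_zero]
        have hle : ∀ δ : ℝ, 0 < δ → expDmax a bs ≤ ENNReal.ofReal δ := by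
          intro δ hδ
          refine iInf_le_of_le δ (iInf_le_of_le hδ (iInf_le_of_le ?_ le_rfl))
          rw [ha0, sub_zero]
          exact psd_real_smul (hBpsd bs hbsB) hδ.le
        have hzero : expDmax a bs = 0 := by
          refine le_antisymm ?_ (by simp)
          refine ENNReal.le_of_forall_pos_le_add fun δ hδ _ => ?_
          rw [zero_add, ← ENNReal.ofReal_coe_nnreal]
          exact hle (δ:ℝ) (by exact_mod_cast hδ)
        rw [hzero]
    · -- main case s > 0
      set b₀ := s⁻¹ • q with hb₀
      have hb₀B : b₀ ∈ B := by
        rw [hBeq]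
        refine ⟨L.smul_mem _ hqL, psd_real_smul hqpsd (inv_nonneg.mpr hs0), ?_⟩
        rw [hb₀, Matrix.smul_mul, trace_smul, htrqre]
        rw [Complex.real_smul, ← Complex.ofReal_mul, inv_mul_cancel₀ hspos.ne',
          Complex.ofReal_one]
      have hqs : q = s • b₀ := (smul_inv_smul₀ hspos.ne' q).symm
      have hsS : s ∈ S := ⟨hs0, b₀, hb₀B, by rw [← hqs]; exact hqa⟩
      have hNs : sInf S ≤ s := csInf_le hSbdd hsS
      have htrqc : (q * c₀).trace = ((s:ℝ) : ℂ) := by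
        rw [hqs, real_smul_eq, Matrix.smul_mul, trace_smul, smul_eq_mul, hc₀tr b₀ hb₀B,
          mul_one]
      have hac : (a * c₀).trace.re = s := by rw [htr_eq, htrqc, Complex.ofReal_re]
      have hsN : s ≤ sInf S := hac ▸ hNlow
      have hNeq : sInf S = s := le_antisymm hNs hsN
      refine ⟨by rw [hNeq, hac], b₀, hb₀B, by rw [hNeq, ← hqs], ?_⟩
      have h1 : expDmax a b₀ ≤ ENNReal.ofReal (sInf S) := by
        rw [hNeq]
        refine iInf_le_of_le s (iInf_le_of_le hspos (iInf_le_of_le ?_ le_rfl))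
        rw [← hqs]; exact hqa
      have h2 : ENNReal.ofReal (sInf S) ≤ expDmax a b₀ := by
        refine le_iInf fun r => le_iInf fun hr => le_iInf fun hpsd => ?_
        exact ENNReal.ofReal_le_ofReal (csInf_le hSbdd ⟨hr.le, b₀, hb₀B, hpsd⟩)
      exact le_antisymm h2 h1
  rw [hsec]
  constructor
  · constructor
    · intro hNeq
      refine ⟨sInf S • b₀m, ?_, ?_, hb₀mpsd, ?_⟩
      · exact Submodule.smul_mem _ _ (Submodule.subset_span hb₀mB)
      · exact psd_real_smul (hBpsd _ hb₀mB) hN0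
      · apply mul_eq_zero_of_trace_zero hb₀mpsd hc₀psd
        rw [Matrix.sub_mul, trace_sub, real_smul_eq, Matrix.smul_mul, trace_smul, smul_eq_mul,
          hc₀tr _ hb₀mB, mul_one, hacre, ← hNeq, sub_self]
    · rintro ⟨q, h1, h2, h3, h4⟩
      exact (key q h1 h2 h3 h4).1
  · intro q h1 h2 h3 h4
    exact (key q h1 h2 h3 h4).2
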